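/- The total number of walks of length n with the six steps N, S, E, W, SE, NW (i.e., (0,1),(0,-1),(1,0),(-1,0),(1,-1),(-1,1)) that start at (0,0) and stay in the quarter plane equals 2^n times the n-th Motzkin number. -/

import Mathlib

/-- Number of quarter-plane walks of length `n` with steps in `S`, starting at `(0,0)`,
staying in the quarter plane, with arbitrary endpoint. -/
noncomputable def qwalkTotal (S : Set (ℤ × ℤ)) (n : ℕ) : ℕ :=
  Nat.card {w : Fin (n + 1) → ℤ × ℤ //
    w 0 = (0, 0) ∧
    (∀ i : Fin n, w i.succ - w i.castSucc ∈ S) ∧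
    (∀ i, 0 ≤ (w i).1 ∧ 0 ≤ (w i).2)}

/-- The `n`-th Motzkin number. -/
def motzkin (n : ℕ) : ℕ :=
  ∑ k ∈ Finset.range (n / 2 + 1), n.choose (2 * k) * ((2 * k).choose k / (k + 1))

/-! ### auxiliary: the harmonic-like functions `rf` -/

def rf (h x y : ℤ) : ℤ := max 0 (min (min (x+1) (y+1)) (min (h+1) (x+y+1-h)))

lemma rf_zero (x y : ℤ) (hx : 0 ≤ x) (hy : 0 ≤ y) : rf 0 x y = 1 := by
  unfold rf; omega

lemma rf_neg (h x y : ℤ) (hh : h < 0) : rf h x y = 0 := by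
  unfold rf; omega

lemma rf_vanish (h x y : ℤ) (hxy : x < 0 ∨ y < 0) : rf h x y = 0 := by
  unfold rf; omega

set_option maxHeartbeats 1000000 in
lemma rf_step (x y h : ℤ) (hx : 0 ≤ x) (hy : 0 ≤ y) (hh : 0 ≤ h) :
    rf h (x+1) y + rf h (x-1) y + rf h x (y+1) + rf h x (y-1)
      + rf h (x+1) (y-1) + rf h (x-1) (y+1)
      = 2*(rf (h-1) x y + rf h x y + rf (h+1) x y) := by
  unfold rf
  rcases (by omega : x - h ≤ -3 ∨ x - h = -2 ∨ x - h = -1 ∨ x - h = 0 ∨ x - h = 1 ∨ x - h = 2 ∨ 3 ≤ x - h) with c1|c1|c1|c1|c1|c1|c1 <;>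
  rcases (by omega : y - h ≤ -3 ∨ y - h = -2 ∨ y - h = -1 ∨ y - h = 0 ∨ y - h = 1 ∨ y - h = 2 ∨ 3 ≤ y - h) with c2|c2|c2|c2|c2|c2|c2 <;>
  · simp (disch := omega) only [min_eq_left, min_eq_right, max_eq_left, max_eq_right]
    omega

/-! ### the step set as a Finset -/

def Sfin : Finset (ℤ × ℤ) := {(0,1), (0,-1), (1,0), (-1,0), (1,-1), (-1,1)}

lemma sum_sfin (g : ℤ × ℤ → ℤ) :
    ∑ s ∈ Sfin, g s = g (0,1) + g (0,-1) + g (1,0) + g (-1,0) + g (1,-1) + g (-1,1) := by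
  rw [Sfin]
  rw [Finset.sum_insert (by decide), Finset.sum_insert (by decide),
      Finset.sum_insert (by decide), Finset.sum_insert (by decide),
      Finset.sum_insert (by decide), Finset.sum_singleton]
  ring

lemma sfin_coord {s : ℤ × ℤ} (hs : s ∈ Sfin) : -1 ≤ s.1 ∧ -1 ≤ s.2 := by
  fin_cases hs <;> constructor <;> norm_num

lemma rf_sum_step (u : ℤ × ℤ) (h : ℤ) (hu1 : 0 ≤ u.1) (hu2 : 0 ≤ u.2) (hh : 0 ≤ h) :
    ∑ s ∈ Sfin, rf h (u.1 + s.1) (u.2 + s.2)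
      = 2*(rf (h-1) u.1 u.2 + rf h u.1 u.2 + rf (h+1) u.1 u.2) := by
  rw [sum_sfin (fun s => rf h (u.1 + s.1) (u.2 + s.2))]
  have e := rf_step u.1 u.2 h hu1 hu2 hh
  norm_num
  convert e using 2 <;> ring_nf

/-! ### walks as a Finset, built by appending steps -/

def wf : (n : ℕ) → Finset (Fin (n+1) → ℤ × ℤ)
  | 0 => {fun _ => (0,0)}
  | n+1 =>
    (((wf n) ×ˢ Sfin).filter
        (fun p => 0 ≤ (p.1 (Fin.last n)).1 + p.2.1 ∧ 0 ≤ (p.1 (Fin.last n)).2 + p.2.2)).image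
      (fun p => Fin.snoc p.1 (p.1 (Fin.last n) + p.2))

lemma mem_wf : ∀ (n : ℕ) (w : Fin (n+1) → ℤ × ℤ),
    w ∈ wf n ↔ (w 0 = (0,0) ∧ (∀ i : Fin n, w i.succ - w i.castSucc ∈ Sfin) ∧
      (∀ i, 0 ≤ (w i).1 ∧ 0 ≤ (w i).2))
  | 0, w => by
    constructor
    · intro hw
      simp only [wf, Finset.mem_singleton] at hw
      subst hw
      refine ⟨rfl, fun i => i.elim0, fun i => by norm_num⟩
    · rintro ⟨h0, -, -⟩
      simp only [wf, Finset.mem_singleton]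
      funext i
      rwa [Fin.fin_one_eq_zero i]
  | n+1, w => by
    constructor
    · intro hw
      simp only [wf, Finset.mem_image, Finset.mem_filter, Finset.mem_product] at hw
      obtain ⟨⟨v, s⟩, ⟨⟨hv, hs⟩, hQ1, hQ2⟩, rfl⟩ := hw
      obtain ⟨hv0, hvstep, hvQ⟩ := (mem_wf n v).1 hv
      refine ⟨?_, ?_, ?_⟩
      · rw [show (0 : Fin (n+2)) = Fin.castSucc 0 by rfl, Fin.snoc_castSucc]
        exact hv0
      · intro i
        refine Fin.lastCases ?_ ?_ i
        · rw [Fin.succ_last, Fin.snoc_last, Fin.snoc_castSucc, add_sub_cancel_left]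
          exact hs
        · intro j
          rw [Fin.succ_castSucc, Fin.snoc_castSucc, Fin.snoc_castSucc]
          exact hvstep j
      · intro i
        refine Fin.lastCases ?_ ?_ i
        · rw [Fin.snoc_last]
          exact ⟨hQ1, hQ2⟩
        · intro j
          rw [Fin.snoc_castSucc]
          exact hvQ j
    · rintro ⟨h0, hstep, hQ⟩
      simp only [wf, Finset.mem_image, Finset.mem_filter, Finset.mem_product]
      refine ⟨(Fin.init w, w (Fin.last (n+1)) - w ((Fin.last n).castSucc)), ⟨⟨?_, ?_⟩, ?_, ?_⟩, ?_⟩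
      · rw [mem_wf n]
        refine ⟨h0, ?_, ?_⟩
        · intro i
          show w (i.succ.castSucc) - w (i.castSucc.castSucc) ∈ Sfin
          rw [← Fin.succ_castSucc]
          exact hstep i.castSucc
        · intro i
          exact hQ i.castSucc
      · rw [← Fin.succ_last]
        exact hstep (Fin.last n)
      · have h1 := (hQ (Fin.last (n+1))).1
        show 0 ≤ (w ((Fin.last n).castSucc)).1 + (w (Fin.last (n+1)) - w ((Fin.last n).castSucc)).1
        rw [Prod.fst_sub]
        omega
      · have h1 := (hQ (Fin.last (n+1))).2
        show 0 ≤ (w ((Fin.last n).castSucc)).2 + (w (Fin.last (n+1)) - w ((Fin.last n).castSucc)).2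
        rw [Prod.snd_sub]
        omega
      · show Fin.snoc (Fin.init w) (Fin.init w (Fin.last n) + _) = w
        have : Fin.init w (Fin.last n) + (w (Fin.last (n+1)) - w ((Fin.last n).castSucc))
            = w (Fin.last (n+1)) := by
          show w ((Fin.last n).castSucc) + _ = _
          ring
        rw [this, Fin.snoc_init_self]

/-! ### Motzkin triangle and the main transfer computation -/

def mo : ℕ → ℕ → ℕ
  | 0, h => if h = 0 then 1 else 0
  | n+1, h => (if h = 0 then 0 else mo n (h-1)) + mo n h + mo n (h+1)

lemma wf_end_nonneg {n : ℕ} {w : Fin (n+1) → ℤ × ℤ} (hw : w ∈ wf n) (i : Fin (n+1)) :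
    0 ≤ (w i).1 ∧ 0 ≤ (w i).2 := ((mem_wf n w).1 hw).2.2 i

lemma wf_sum (n : ℕ) : ∀ h : ℕ,
    (∑ w ∈ wf n, rf (h : ℤ) (w (Fin.last n)).1 (w (Fin.last n)).2)
      = (2:ℤ)^n * (mo n h : ℤ) := by
  induction n with
  | zero =>
    intro h
    simp only [wf, Finset.sum_singleton]
    show rf (h:ℤ) 0 0 = _
    unfold rf mo
    rcases h with _|h
    · norm_num
    · simp only [Nat.succ_ne_zero, if_false, pow_zero, Nat.cast_zero, one_mul]
      push_cast
      omega
  | succ n ih =>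
    intro h
    have hinj : ∀ p ∈ ((wf n) ×ˢ Sfin).filter
        (fun p => 0 ≤ (p.1 (Fin.last n)).1 + p.2.1 ∧ 0 ≤ (p.1 (Fin.last n)).2 + p.2.2),
        ∀ q ∈ ((wf n) ×ˢ Sfin).filter
        (fun p => 0 ≤ (p.1 (Fin.last n)).1 + p.2.1 ∧ 0 ≤ (p.1 (Fin.last n)).2 + p.2.2),
        (Fin.snoc p.1 (p.1 (Fin.last n) + p.2) : Fin (n+2) → ℤ × ℤ) = Fin.snoc q.1 (q.1 (Fin.last n) + q.2) → p = q := by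
      intro p _ q _ heq
      have h1 : p.1 = q.1 := by
        have := congrArg Fin.init heq
        rwa [Fin.init_snoc, Fin.init_snoc] at this
      have h2 := congrFun heq (Fin.last (n+1))
      rw [Fin.snoc_last, Fin.snoc_last, h1] at h2
      exact Prod.ext h1 (add_left_cancel h2)
    simp only [wf]
    rw [Finset.sum_image hinj, Finset.sum_filter, Finset.sum_product]
    have hstep : ∀ v ∈ wf n,
        (∑ s ∈ Sfin, if 0 ≤ (v (Fin.last n)).1 + s.1 ∧ 0 ≤ (v (Fin.last n)).2 + s.2 then
            rf (h:ℤ) ((Fin.snoc v (v (Fin.last n) + s) : Fin (n+2) → ℤ × ℤ) (Fin.last (n+1))).1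
              ((Fin.snoc v (v (Fin.last n) + s) : Fin (n+2) → ℤ × ℤ) (Fin.last (n+1))).2 else 0)
          = 2*(rf ((h:ℤ)-1) (v (Fin.last n)).1 (v (Fin.last n)).2
              + rf (h:ℤ) (v (Fin.last n)).1 (v (Fin.last n)).2
              + rf ((h:ℤ)+1) (v (Fin.last n)).1 (v (Fin.last n)).2) := by
      intro v hv
      obtain ⟨hv1, hv2⟩ := wf_end_nonneg hv (Fin.last n)
      rw [← rf_sum_step (v (Fin.last n)) (h:ℤ) hv1 hv2 (by positivity)]
      refine Finset.sum_congr rfl ?_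
      intro s hs
      rw [Fin.snoc_last, Prod.fst_add, Prod.snd_add]
      split_ifs with hQ
      · rfl
      · rw [rf_vanish]
        omega
    rw [Finset.sum_congr rfl hstep, ← Finset.mul_sum, Finset.sum_add_distrib,
      Finset.sum_add_distrib]
    have e2 := ih h
    have e3 := ih (h+1)
    push_cast at e3
    rcases Nat.eq_zero_or_pos h with h0 | h0
    · subst h0
      have e1 : (∑ w ∈ wf n, rf ((0:ℕ):ℤ) ((w (Fin.last n)).1) ((w (Fin.last n)).2)) = 2^n * (mo n 0 : ℤ) := ih 0
      have hz : (∑ w ∈ wf n, rf (((0:ℕ):ℤ) - 1) ((w (Fin.last n)).1) ((w (Fin.last n)).2)) = 0 :=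
        Finset.sum_eq_zero fun w _ => rf_neg _ _ _ (by norm_num)
      have hmo : mo (n+1) 0 = mo n 0 + mo n 1 := by simp [mo]
      rw [hz, hmo]
      rw [pow_succ]
      push_cast at e1 e3 ⊢
      linarith [e1, e3]
    · obtain ⟨k, rfl⟩ := Nat.exists_eq_succ_of_ne_zero (Nat.pos_iff_ne_zero.mp h0)
      have ecast : ((k+1:ℕ):ℤ) - 1 = (k:ℤ) := by push_cast; ring
      rw [ecast]
      have e1 := ih k
      have hmo : mo (n+1) (k+1) = mo n k + mo n (k+1) + mo n (k+2) := by simp [mo]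
      rw [hmo, pow_succ]
      simp only [show k+1+1 = k+2 from rfl] at e3
      push_cast at e2 e3 ⊢
      linarith [e1, e2, e3]

lemma card_wf (n : ℕ) : ((wf n).card : ℤ) = 2^n * (mo n 0 : ℤ) := by
  have hws := wf_sum n 0
  rw [Nat.cast_zero] at hws
  rw [← hws]
  rw [Finset.sum_congr rfl (fun w hw => rf_zero (w (Fin.last n)).1 (w (Fin.last n)).2
    (wf_end_nonneg hw (Fin.last n)).1 (wf_end_nonneg hw (Fin.last n)).2)]
  rw [Finset.sum_const, nsmul_eq_mul, mul_one]

/-! ### the Dyck-path triangle -/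

def dd : ℕ → ℕ → ℕ
  | 0, h => if h = 0 then 1 else 0
  | j+1, h => (if h = 0 then 0 else dd j (h-1)) + dd j (h+1)

lemma dd_vanish : ∀ j h, j < h → dd j h = 0
  | 0, h, hlt => by
    have : h ≠ 0 := by omega
    simp [dd, this]
  | j+1, h, hlt => by
    have h1 : dd j (h-1) = 0 := dd_vanish j (h-1) (by omega)
    have h2 : dd j (h+1) = 0 := dd_vanish j (h+1) (by omega)
    simp [dd, h1, h2]

lemma dd_parity : ∀ j h, (j + h) % 2 = 1 → dd j h = 0
  | 0, h, hp => by
    have : h ≠ 0 := by omega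
    simp [dd, this]
  | j+1, h, hp => by
    rcases Nat.eq_zero_or_pos h with rfl | hpos
    · have e := dd_parity j 1 (by omega)
      simp [dd, e]
    · have e1 : dd j (h-1) = 0 := dd_parity j (h-1) (by omega)
      have e2 : dd j (h+1) = 0 := dd_parity j (h+1) (by omega)
      simp [dd, e1, e2]

lemma dd_closed : ∀ j, ∀ h, h ≤ j → (j - h) % 2 = 0 →
    dd j h + j.choose (j + 1 - (j - h)/2) = j.choose ((j - h)/2)
  | 0, h, hle, hp => by
    interval_cases h
    simp [dd]
  | j+1, h, hle, hp => by
    obtain ⟨K, hK⟩ : ∃ K, j + 1 - h = 2*K := ⟨(j+1-h)/2, by omega⟩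
    have hg1 : (j + 1 - h)/2 = K := by omega
    rcases Nat.eq_zero_or_pos h with rfl | hpos
    · -- h = 0
      have hK1 : 1 ≤ K := by omega
      have hdd : dd (j+1) 0 = dd j 1 := by simp [dd]
      have IH := dd_closed j 1 (by omega) (by omega)
      rw [show (j - 1)/2 = K - 1 by omega,
          show j + 1 - (K-1) = j + 2 - K by omega] at IH
      have p1 : (j+1).choose K = j.choose (K-1) + j.choose K := by
        have hc := Nat.choose_succ_succ j (K-1)
        simp only [Nat.succ_eq_add_one] at hc
        rwa [show (K-1)+1 = K by omega] at hc
      have p2 : (j+1).choose (j + 2 - K) = j.choose (j + 1 - K) + j.choose (j + 2 - K) := by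
        have hc := Nat.choose_succ_succ j (j+1-K)
        simp only [Nat.succ_eq_add_one] at hc
        rwa [show (j+1-K)+1 = j+2-K by omega] at hc
      have sym : j.choose K = j.choose (j + 1 - K) := by
        rw [show j + 1 - K = K from by omega]
      rw [show (j+1-0) = j+1 from rfl, show (j+1)/2 = K by omega, hdd,
          show j + 1 + 1 - K = j + 2 - K from by omega]
      linarith [IH, p1, p2, sym]
    · rcases Nat.lt_or_ge j h with hlt | hge
      · -- h = j + 1, K = 0
        have hh : h = j + 1 := by omega
        subst hh
        have hdd : dd (j+1) (j+1) = dd j j + dd j (j+2) := by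
          simp [dd, Nat.succ_ne_zero]
        have hv : dd j (j+2) = 0 := dd_vanish j (j+2) (by omega)
        have IH := dd_closed j j (le_refl j) (by omega)
        rw [Nat.sub_self] at IH
        simp only [Nat.zero_div, Nat.sub_zero, Nat.choose_zero_right] at IH
        have hch : j.choose (j+1) = 0 := Nat.choose_eq_zero_of_lt (by omega)
        rw [Nat.sub_self, Nat.zero_div, Nat.sub_zero, Nat.choose_zero_right]
        have hch2 : (j+1).choose (j+1+1) = 0 := Nat.choose_eq_zero_of_lt (by omega)
        rw [hch2, hdd]
        omega
      · -- 1 ≤ h ≤ j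
        have hK1 : 1 ≤ K := by omega
        have hj : h + 1 ≤ j := by omega
        have hdd : dd (j+1) h = dd j (h-1) + dd j (h+1) := by
          have : h ≠ 0 := by omega
          simp [dd, this]
        have IH1 := dd_closed j (h-1) (by omega) (by omega)
        rw [show (j - (h-1))/2 = K by omega] at IH1
        have IH2 := dd_closed j (h+1) hj (by omega)
        rw [show (j - (h+1))/2 = K - 1 by omega,
            show j + 1 - (K-1) = j + 2 - K by omega] at IH2
        have p1 : (j+1).choose K = j.choose (K-1) + j.choose K := by
          have hc := Nat.choose_succ_succ j (K-1)
          simp only [Nat.succ_eq_add_one] at hc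
          rwa [show (K-1)+1 = K by omega] at hc
        have p2 : (j+1).choose (j + 2 - K) = j.choose (j + 1 - K) + j.choose (j + 2 - K) := by
          have hc := Nat.choose_succ_succ j (j+1-K)
          simp only [Nat.succ_eq_add_one] at hc
          rwa [show (j+1-K)+1 = j+2-K by omega] at hc
        rw [hg1, hdd, show j + 1 + 1 - K = j + 2 - K from by omega]
        linarith [IH1, IH2, p1, p2]

lemma dd_cat (k : ℕ) : dd (2*k) 0 = catalan k := by
  have H := dd_closed (2*k) 0 (by omega) (by omega)
  rw [Nat.sub_zero, show (2*k)/2 = k by omega, show 2*k+1-k = k+1 by omega] at H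
  have hc : (2*k).choose (k+1) * (k+1) = (2*k).choose k * k := by
    have hcc := Nat.choose_succ_right_eq (2*k) k
    rwa [show 2*k - k = k by omega] at hcc
  have hcb : (k+1) * catalan k = (2*k).choose k := by
    rw [succ_mul_catalan_eq_centralBinom]
    rfl
  have e1 : (k+1) * (dd (2*k) 0) + (k+1) * ((2*k).choose (k+1)) = (k+1) * ((2*k).choose k) := by
    rw [← Nat.mul_add, H]
  rw [mul_comm (k+1) ((2*k).choose (k+1)), hc] at e1
  have e3 : (k+1) * ((2*k).choose k) = (2*k).choose k * k + (2*k).choose k := by ring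
  have e4 : (k+1) * (dd (2*k) 0) = (2*k).choose k := by linarith [e1, e3]
  have e5 : (k+1) * (dd (2*k) 0) = (k+1) * catalan k := by rw [e4, hcb]
  exact Nat.eq_of_mul_eq_mul_left (Nat.succ_pos k) e5

lemma mo_sum (n : ℕ) : ∀ h : ℕ, mo n h = ∑ j ∈ Finset.range (n+1), n.choose j * dd j h := by
  induction n with
  | zero =>
    intro h
    simp [mo, dd]
  | succ n ih =>
    intro h
    have key : ∑ j ∈ Finset.range (n+2), (n+1).choose j * dd j h
        = (∑ j ∈ Finset.range (n+1), n.choose j * dd (j+1) h)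
          + ∑ j ∈ Finset.range (n+1), n.choose j * dd j h := by
      rw [Finset.sum_range_succ' (fun j => (n+1).choose j * dd j h) (n+1)]
      have hterm : ∀ j, (n+1).choose (j+1) * dd (j+1) h
          = n.choose j * dd (j+1) h + n.choose (j+1) * dd (j+1) h := by
        intro j
        rw [Nat.choose_succ_succ, Nat.add_mul]
      rw [Finset.sum_congr rfl (fun j _ => hterm j), Finset.sum_add_distrib]
      have shift : (∑ j ∈ Finset.range (n+1), n.choose (j+1) * dd (j+1) h)
          + (n+1).choose 0 * dd 0 h
          = ∑ j ∈ Finset.range (n+1), n.choose j * dd j h := by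
        rw [show (n+1).choose 0 * dd 0 h = n.choose 0 * dd 0 h by simp]
        rw [← Finset.sum_range_succ' (fun j => n.choose j * dd j h) (n+1)]
        rw [Finset.sum_range_succ]
        rw [Nat.choose_eq_zero_of_lt (by omega : n < n+1)]
        simp
      linarith [shift]
    rw [show n+1+1 = n+2 from rfl, key]
    rcases Nat.eq_zero_or_pos h with rfl | hpos
    · have hmo : mo (n+1) 0 = mo n 0 + mo n 1 := by simp [mo]
      have hddj : ∀ j, dd (j+1) 0 = dd j 1 := fun j => by simp [dd]
      rw [hmo, Finset.sum_congr rfl (fun j _ => by rw [hddj j]), ih 0, ih 1]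
      ring
    · obtain ⟨k, rfl⟩ := Nat.exists_eq_succ_of_ne_zero (Nat.pos_iff_ne_zero.mp hpos)
      have hmo : mo (n+1) (k+1) = mo n k + mo n (k+1) + mo n (k+2) := by simp [mo]
      have hddj : ∀ j, dd (j+1) (k+1) = dd j k + dd j (k+2) := fun j => by simp [dd]
      have hsplit : (∑ j ∈ Finset.range (n+1), n.choose j * dd (j+1) (k+1))
          = (∑ j ∈ Finset.range (n+1), n.choose j * dd j k)
            + ∑ j ∈ Finset.range (n+1), n.choose j * dd j (k+2) := by
        rw [← Finset.sum_add_distrib]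
        refine Finset.sum_congr rfl fun j _ => ?_
        rw [hddj j, Nat.mul_add]
      rw [hmo, hsplit, ← ih k, ← ih (k+1), ← ih (k+2)]
      ring

lemma mo_zero (n : ℕ) : mo n 0 = motzkin n := by
  rw [mo_sum n 0]
  have hodd : ∀ j ∈ Finset.range (n+1), n.choose j * dd j 0 ≠ 0 → j % 2 = 0 := by
    intro j _ hne
    by_contra hoddj
    have hz : dd j 0 = 0 := dd_parity j 0 (by omega)
    simp [hz] at hne
  rw [← Finset.sum_filter_of_ne hodd]
  rw [motzkin]
  have hterm : ∀ k, n.choose (2*k) * ((2*k).choose k / (k+1)) = n.choose (2*k) * dd (2*k) 0 := by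
    intro k
    rw [dd_cat]
    congr 1
    have hcb : (2*k).choose k = (k+1) * catalan k := by
      rw [succ_mul_catalan_eq_centralBinom]
      rfl
    rw [hcb, Nat.mul_div_cancel_left _ (Nat.succ_pos k)]
  rw [Finset.sum_congr rfl (fun k _ => hterm k)]
  refine Finset.sum_nbij' (fun j => j / 2) (fun k => 2 * k) ?_ ?_ ?_ ?_ ?_
  · intro j hj
    simp only [Finset.mem_filter, Finset.mem_range] at hj
    simp only [Finset.mem_range]
    omega
  · intro k hk
    simp only [Finset.mem_range] at hk
    simp only [Finset.mem_filter, Finset.mem_range]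
    omega
  · intro j hj
    simp only [Finset.mem_filter, Finset.mem_range] at hj
    omega
  · intro k hk
    omega
  · intro j hj
    simp only [Finset.mem_filter, Finset.mem_range] at hj
    rw [show 2 * (j / 2) = j by omega]

theorem walks_sixsteps_total (n : ℕ) :
    qwalkTotal {(0, 1), (0, -1), (1, 0), (-1, 0), (1, -1), (-1, 1)} n =
      2 ^ n * motzkin n := by
  have hmem : ∀ u : ℤ × ℤ,
      u ∈ ({(0, 1), (0, -1), (1, 0), (-1, 0), (1, -1), (-1, 1)} : Set (ℤ × ℤ)) ↔ u ∈ Sfin := by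
    intro u
    simp [Sfin]
  have hcond : ∀ w : Fin (n+1) → ℤ × ℤ,
      (w 0 = (0,0) ∧
        (∀ i : Fin n, w i.succ - w i.castSucc ∈
          ({(0, 1), (0, -1), (1, 0), (-1, 0), (1, -1), (-1, 1)} : Set (ℤ × ℤ))) ∧
        (∀ i, 0 ≤ (w i).1 ∧ 0 ≤ (w i).2)) ↔ w ∈ wf n := by
    intro w
    rw [mem_wf]
    constructor
    · rintro ⟨a, b, c⟩
      exact ⟨a, fun i => (hmem _).1 (b i), c⟩
    · rintro ⟨a, b, c⟩
      exact ⟨a, fun i => (hmem _).2 (b i), c⟩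
  unfold qwalkTotal
  rw [Nat.card_congr (Equiv.subtypeEquivRight hcond)]
  rw [Nat.card_eq_finsetCard]
  have hZ := card_wf n
  rw [mo_zero] at hZ
  exact_mod_cast hZ
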